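/- Let K be a field of characteristic 0 and let ξ_m be a primitive m-th root of unity in an algebraic closure of K. Then PGL₂(K) contains a subgroup isomorphic to ℤ/mℤ if and only if ξ_m + ξ_m⁻¹ ∈ K. -/

import Mathlib

open Matrix

namespace PGLAux

lemma scalar2_iff {R : Type*} [CommRing R] {M : Matrix (Fin 2) (Fin 2) R} :
    (∃ r : R, M = r • (1 : Matrix (Fin 2) (Fin 2) R)) ↔
      M 0 1 = 0 ∧ M 1 0 = 0 ∧ M 0 0 = M 1 1 := by
  constructor
  · rintro ⟨r, rfl⟩; simp [Matrix.smul_apply, Matrix.one_apply]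
  · rintro ⟨h1, h2, h3⟩
    refine ⟨M 0 0, ?_⟩
    ext i j
    fin_cases i <;> fin_cases j <;>
      simp [Matrix.smul_apply, Matrix.one_apply, h1, h2, h3]

lemma mem_center_GL2_iff {K : Type*} [Field K] {U : GL (Fin 2) K} :
    U ∈ Subgroup.center (GL (Fin 2) K) ↔
      ∃ r : K, (U : Matrix (Fin 2) (Fin 2) K) = r • 1 := by
  constructor
  · intro hU
    obtain ⟨r, hr⟩ := Matrix.mem_range_scalar_of_commute_transvectionStruct
      (M := (U : Matrix (Fin 2) (Fin 2) K)) (fun t => by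
        have h := Subgroup.mem_center_iff.mp hU
          ⟨t.toMatrix, t.inv.toMatrix, t.mul_inv, t.inv_mul⟩
        have := congrArg Units.val h
        have h' : t.toMatrix * (U : Matrix (Fin 2) (Fin 2) K) = U * t.toMatrix := by
          simpa [Units.val_mul] using this
        exact h')
    refine ⟨r, ?_⟩
    rw [← hr]
    ext i j
    simp [Matrix.scalar_apply, Matrix.smul_apply, Matrix.one_apply, Matrix.diagonal]
  · rintro ⟨r, hr⟩
    rw [Subgroup.mem_center_iff]
    intro B
    ext : 1
    simp [Units.val_mul, hr, mul_smul_comm, smul_mul_assoc]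

lemma cayley2 {R : Type*} [CommRing R] (B : Matrix (Fin 2) (Fin 2) R) :
    B * B = (Matrix.trace B) • B - (Matrix.det B) • 1 := by
  ext i j
  fin_cases i <;> fin_cases j <;>
    simp [Matrix.mul_apply, Fin.sum_univ_two, Matrix.trace_fin_two, Matrix.det_fin_two,
      Matrix.one_apply, Matrix.smul_apply, Matrix.sub_apply] <;> ring

lemma pow_formula {R : Type*} [CommRing R] (B : Matrix (Fin 2) (Fin 2) R) (α β : R)
    (h : B * B = (α + β) • B - (α * β) • 1) (j : ℕ) :
    (α - β) • B ^ j = (α ^ j - β ^ j) • B + (α * β ^ j - β * α ^ j) • 1 := by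
  induction j with
  | zero => rw [pow_zero]; module
  | succ j ih =>
      calc (α - β) • B ^ (j+1) = ((α - β) • B ^ j) * B := by
            rw [pow_succ, smul_mul_assoc]
      _ = ((α ^ j - β ^ j) • B + (α * β ^ j - β * α ^ j) • 1) * B := by rw [ih]
      _ = (α ^ j - β ^ j) • (B * B) + (α * β ^ j - β * α ^ j) • B := by
            rw [add_mul, smul_mul_assoc, smul_mul_assoc, one_mul]
      _ = (α ^ j - β ^ j) • ((α + β) • B - (α * β) • 1) + (α * β ^ j - β * α ^ j) • B := by
            rw [h]
      _ = (α ^ (j+1) - β ^ (j+1)) • B + (α * β ^ (j+1) - β * α ^ (j+1)) • 1 := by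
            match_scalars <;> ring

lemma det_sub_smul_one {R : Type*} [CommRing R] (B : Matrix (Fin 2) (Fin 2) R) (x : R) :
    Matrix.det (B - x • 1) = x ^ 2 - Matrix.trace B * x + Matrix.det B := by
  simp [Matrix.det_fin_two, Matrix.trace_fin_two, Matrix.sub_apply, Matrix.smul_apply,
    Matrix.one_apply]
  ring

lemma pow_mulVec_eigen {F : Type*} [Field F] {B : Matrix (Fin 2) (Fin 2) F} {α : F}
    {v : Fin 2 → F} (hv : B.mulVec v = α • v) (j : ℕ) :
    (B ^ j).mulVec v = α ^ j • v := by
  induction j with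
  | zero => simp
  | succ j ih =>
      rw [pow_succ, ← Matrix.mulVec_mulVec, hv, Matrix.mulVec_smul, ih, smul_smul, pow_succ]
      ring_nf

lemma cheb {F : Type*} [Field F] (S : Subring F) {ζ : F} (hζ : ζ ≠ 0)
    (h : ζ + ζ⁻¹ ∈ S) (k : ℕ) : ζ ^ k + (ζ⁻¹) ^ k ∈ S := by
  have key : ∀ k : ℕ, (ζ ^ k + (ζ⁻¹) ^ k ∈ S ∧ ζ ^ (k+1) + (ζ⁻¹) ^ (k+1) ∈ S) := by
    intro k
    induction k with
    | zero => exact ⟨by simpa using S.add_mem S.one_mem S.one_mem, by simpa using h⟩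
    | succ k ih =>
        refine ⟨ih.2, ?_⟩
        have hid : ζ ^ (k+2) + (ζ⁻¹) ^ (k+2)
            = (ζ + ζ⁻¹) * (ζ ^ (k+1) + (ζ⁻¹) ^ (k+1)) - (ζ ^ k + (ζ⁻¹) ^ k) := by
          linear_combination (-(ζ ^ k + (ζ⁻¹) ^ k)) * mul_inv_cancel₀ hζ
        rw [hid]
        exact S.sub_mem (S.mul_mem h ih.2) ih.1
  exact (key k).1



lemma scalar_of_map {K L : Type*} [Field K] [Field L] (φ : K →+* L)
    {M : Matrix (Fin 2) (Fin 2) K} {s : L}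
    (h : M.map φ = s • 1) : ∃ r : K, M = r • 1 := by
  have e : ∀ i j, φ (M i j) = s * (1 : Matrix (Fin 2) (Fin 2) L) i j := by
    intro i j
    have := congrFun (congrFun h i) j
    simpa [Matrix.map_apply, Matrix.smul_apply] using this
  refine (scalar2_iff (R := K)).mpr ⟨?_, ?_, ?_⟩
  · apply φ.injective; simpa [Matrix.one_apply] using e 0 1
  · apply φ.injective; simpa [Matrix.one_apply] using e 1 0
  · apply φ.injective
    have := (e 0 0).trans (e 1 1).symm
    simpa [Matrix.one_apply] using this

lemma exists_subgroup_zmod {G : Type*} [Group G] {g : G} {m : ℕ}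
    (h : orderOf g = m) : ∃ H : Subgroup G, Nonempty (H ≃* Multiplicative (ZMod m)) := by
  refine ⟨Subgroup.zpowers g, ?_⟩
  have hcyc : IsCyclic (Subgroup.zpowers g) := by
    refine ⟨⟨⟨g, Subgroup.mem_zpowers g⟩, ?_⟩⟩
    rintro ⟨x, hx⟩
    obtain ⟨n, rfl⟩ := Subgroup.mem_zpowers_iff.mp hx
    exact ⟨n, by ext; simp⟩
  have hcard : Nat.card (Subgroup.zpowers g) = m := by rw [Nat.card_zpowers, h]
  rw [← hcard]
  exact ⟨(zmodCyclicMulEquiv hcyc).symm⟩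


lemma map_smul_one {K L : Type*} [Field K] [Field L] (φ : K →+* L) (r : K) :
    ((r • 1 : Matrix (Fin 2) (Fin 2) K)).map φ = φ r • 1 := by
  ext i j
  simp [Matrix.map_apply, Matrix.smul_apply, Matrix.one_apply, apply_ite φ]

lemma exists_orderOf_eq {K L : Type*} [Field K] [Field L] (φ : K →+* L)
    {m : ℕ} (hm : 2 ≤ m) {ξ β : L} (hξ : IsPrimitiveRoot ξ m) (hβ : β ≠ 0)
    (tK dK : K) (ht : φ tK = ξ * β + β) (hd : φ dK = ξ * β * β) :
    ∃ g : GL (Fin 2) K ⧸ Subgroup.center (GL (Fin 2) K), orderOf g = m := by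
  have hξ0 : ξ ≠ 0 := by
    intro h
    have := hξ.pow_eq_one
    rw [h, zero_pow (by omega)] at this
    exact zero_ne_one this
  have hξ1 : ξ ≠ 1 := by
    intro h
    have := hξ.dvd_of_pow_eq_one 1 (by simp [h])
    have := Nat.le_of_dvd one_pos this
    omega
  set α : L := ξ * β with hα
  have hαβ : α ≠ β := by
    intro h
    apply hξ1
    have h0 : (ξ - 1) * β = 0 := by rw [hα] at h; linear_combination h
    rcases mul_eq_zero.mp h0 with h' | h'
    · exact sub_eq_zero.mp h'
    · exact absurd h' hβ
  have hdK : dK ≠ 0 := by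
    intro h
    rw [h, map_zero] at hd
    rcases mul_eq_zero.mp hd.symm with h' | h'
    · rw [hα] at h'
      rcases mul_eq_zero.mp h' with h'' | h''
      · exact hξ0 h''
      · exact hβ h''
    · exact hβ h'
  set A : Matrix (Fin 2) (Fin 2) K := !![0, -dK; 1, tK] with hA
  have hdetA : A.det = dK := by simp [hA, Matrix.det_fin_two]
  have hUnit : IsUnit A := by
    rw [Matrix.isUnit_iff_isUnit_det, hdetA]
    exact isUnit_iff_ne_zero.mpr hdK
  obtain ⟨U, hU⟩ := hUnit
  set B : Matrix (Fin 2) (Fin 2) L := A.map φ with hB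
  have htr : Matrix.trace B = α + β := by
    simp [hB, hA, Matrix.trace_fin_two, Matrix.map_apply, ht]
  have hdet : Matrix.det B = α * β := by
    simp [hB, hA, Matrix.det_fin_two, Matrix.map_apply, hd, mul_assoc]
  have hCH : B * B = (α + β) • B - (α * β) • 1 := by
    rw [cayley2 B, htr, hdet]
  have hB10 : B 1 0 = 1 := by simp [hB, hA, Matrix.map_apply]
  have hApow : ∀ j : ℕ, (A ^ j).map φ = B ^ j := by
    intro j
    rw [hB, ← RingHom.mapMatrix_apply, ← RingHom.mapMatrix_apply, map_pow]
  have crit : ∀ j : ℕ, ((QuotientGroup.mk U :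
      GL (Fin 2) K ⧸ Subgroup.center (GL (Fin 2) K)) ^ j = 1 ↔ ξ ^ j = 1) := by
    intro j
    rw [← QuotientGroup.mk_pow, QuotientGroup.eq_one_iff, mem_center_GL2_iff]
    have hvalpow : ((U ^ j : GL (Fin 2) K) : Matrix (Fin 2) (Fin 2) K) = A ^ j := by
      rw [Units.val_pow_eq_pow_val, hU]
    constructor
    · rintro ⟨r, hr⟩
      rw [hvalpow] at hr
      have hBj : B ^ j = φ r • 1 := by rw [← hApow, hr, map_smul_one]
      have := pow_formula B α β hCH j
      rw [hBj] at this
      have h10 := congr_fun₂ this 1 0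
      simp [Matrix.smul_apply, Matrix.add_apply, Matrix.one_apply, hB10] at h10
      -- h10 : α ^ j = β ^ j (roughly)
      have hpow : α ^ j = β ^ j := by linear_combination -h10
      rw [hα, mul_pow] at hpow
      have : ξ ^ j = 1 := by
        field_simp at hpow
        tauto
      exact this
    · intro hj
      have hpow : α ^ j = β ^ j := by rw [hα, mul_pow, hj, one_mul]
      have key := pow_formula B α β hCH j
      rw [hpow] at key
      have : (α - β) • B ^ j = (α - β) • ((β ^ j) • 1) := by
        rw [key]
        match_scalars <;> ring
      have hBj : B ^ j = (β ^ j) • 1 :=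
        smul_right_injective _ (sub_ne_zero_of_ne hαβ) this
      rw [← hApow] at hBj
      obtain ⟨r, hr⟩ := scalar_of_map φ hBj
      exact ⟨r, by rw [hvalpow, hr]⟩
  refine ⟨QuotientGroup.mk U, ?_⟩
  refine Nat.dvd_antisymm ?_ ?_
  · exact orderOf_dvd_of_pow_eq_one ((crit m).mpr hξ.pow_eq_one)
  · exact hξ.dvd_of_pow_eq_one _ ((crit _).mp (pow_orderOf_eq_one _))


lemma binom_nilp {L : Type*} [Field L] (B N : Matrix (Fin 2) (Fin 2) L) (α : L)
    (hN : B = α • 1 + N) (hN2 : N * N = 0) (j : ℕ) :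
    B ^ (j + 1) = α ^ (j + 1) • 1 + (((j : L) + 1) * α ^ j) • N := by
  induction j with
  | zero => simpa using hN
  | succ j ih =>
      have h2 : B ^ (j + 2) = (α ^ (j + 1) • 1 + (((j : L) + 1) * α ^ j) • N) * (α • 1 + N) := by
        rw [pow_succ, ih, ← hN]
      rw [h2]
      simp only [add_mul, mul_add, smul_mul_assoc, mul_smul_comm, hN2, smul_zero, mul_one,
        one_mul, add_zero, smul_smul]
      match_scalars <;> push_cast <;> ring

end PGLAux

open PGLAux

/-- The projective general linear group PGL₂(K). -/
abbrev PGL2 (K : Type*) [Field K] :=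
  GL (Fin 2) K ⧸ Subgroup.center (GL (Fin 2) K)

set_option maxHeartbeats 1600000 in
/-- For K of characteristic 0 and ξ a primitive m-th root of unity in
the algebraic closure of K, PGL₂(K) contains a subgroup isomorphic to ℤ/mℤ iff
ξ + ξ⁻¹ ∈ K. -/
theorem pgl2_contains_cyclic_iff (K : Type*) [Field K] [CharZero K]
    (m : ℕ) (hm : 0 < m)
    (ξ : AlgebraicClosure K) (hξ : IsPrimitiveRoot ξ m) :
    (∃ H : Subgroup (PGL2 K), Nonempty (↥H ≃* Multiplicative (ZMod m))) ↔
      ξ + ξ⁻¹ ∈ Set.range (algebraMap K (AlgebraicClosure K)) := by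
  classical
  set φ : K →+* AlgebraicClosure K := algebraMap K (AlgebraicClosure K) with hφ
  have hφinj : Function.Injective φ := φ.injective
  constructor
  · rintro ⟨H, ⟨e⟩⟩
    by_cases hm1 : m = 1
    · subst hm1
      have hx : ξ = 1 := by simpa using hξ.pow_eq_one
      refine ⟨2, ?_⟩
      rw [hx, inv_one, map_ofNat]
      norm_num
    have hm2 : 2 ≤ m := by omega
    -- an element of order m in PGL2 K
    set x : H := e.symm (Multiplicative.ofAdd (1 : ZMod m)) with hxdef
    have hordx : orderOf ((x : PGL2 K)) = m := by
      rw [Subgroup.orderOf_coe, hxdef, MulEquiv.orderOf_eq e.symm,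
        orderOf_ofAdd_eq_addOrderOf, ZMod.addOrderOf_one]
    obtain ⟨U, hU⟩ := QuotientGroup.mk_surjective ((x : PGL2 K))
    rw [← hU] at hordx
    set M : Matrix (Fin 2) (Fin 2) K := (U : Matrix (Fin 2) (Fin 2) K) with hM
    set B := M.map φ with hB
    have hdM : M.det ≠ 0 := by
      have := (Matrix.isUnit_iff_isUnit_det M).mp U.isUnit
      exact IsUnit.ne_zero this
    have hdB : Matrix.det B = φ M.det := (φ.map_det M).symm
    have htB : Matrix.trace B = φ M.trace := by
      simp [hB, Matrix.trace_fin_two, Matrix.map_apply, map_add]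
    have hdB0 : Matrix.det B ≠ 0 := by
      rw [hdB]
      simpa using hdM
    -- the two eigenvalues
    obtain ⟨α, hroot⟩ := IsAlgClosed.exists_root
      (p := Polynomial.X ^ 2 - Polynomial.C (Matrix.trace B) * Polynomial.X
        + Polynomial.C (Matrix.det B)) (by
          have : (Polynomial.X ^ 2 - Polynomial.C (Matrix.trace B) * Polynomial.X
              + Polynomial.C (Matrix.det B) : Polynomial (AlgebraicClosure K)).degree = 2 := by
            compute_degree!
          rw [this]; decide)
    have hroot' : α ^ 2 - Matrix.trace B * α + Matrix.det B = 0 := by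
      simpa [Polynomial.IsRoot] using hroot
    set β := Matrix.trace B - α with hβdef
    have hsum : α + β = Matrix.trace B := by rw [hβdef]; ring
    have hprod : α * β = Matrix.det B := by rw [hβdef]; linear_combination -hroot'
    have hCH : B * B = (α + β) • B - (α * β) • 1 := by
      rw [hsum, hprod]; exact cayley2 B
    have hα0 : α ≠ 0 := by
      intro h; rw [h, zero_mul] at hprod; exact hdB0 hprod.symm
    have hβ0 : β ≠ 0 := by
      intro h; rw [h, mul_zero] at hprod; exact hdB0 hprod.symm
    have hBpow : ∀ j : ℕ, (M ^ j).map φ = B ^ j := by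
      intro j
      rw [hB, ← RingHom.mapMatrix_apply, ← RingHom.mapMatrix_apply, map_pow]
    have crit : ∀ j : ℕ, ((QuotientGroup.mk U : PGL2 K) ^ j = 1 ↔ ∃ r : K, M ^ j = r • 1) := by
      intro j
      rw [← QuotientGroup.mk_pow, QuotientGroup.eq_one_iff, mem_center_GL2_iff]
      have hvalpow : ((U ^ j : GL (Fin 2) K) : Matrix (Fin 2) (Fin 2) K) = M ^ j := by
        rw [Units.val_pow_eq_pow_val, hM]
      rw [hvalpow]
    -- B^m is a scalar
    obtain ⟨r, hr⟩ := (crit m).mp (by rw [← hordx]; exact pow_orderOf_eq_one _)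
    have hBm : B ^ m = φ r • 1 := by rw [← hBpow, hr, map_smul_one]
    haveI hCharF : CharZero (AlgebraicClosure K) := charZero_of_injective_algebraMap hφinj
    -- the eigenvalues are distinct
    have hαβ : α ≠ β := by
      intro hab
      set N := B - α • 1 with hNdef
      have hBN : B = α • 1 + N := by rw [hNdef]; module
      have hN2 : N * N = 0 := by
        have expand : N * N = B * B - (α + α) • B + (α * α) • 1 := by
          rw [hNdef]
          simp only [sub_mul, mul_sub, smul_mul_assoc, mul_smul_comm, mul_one, one_mul,
            smul_smul]
          match_scalars <;> ring
        rw [expand, hCH, ← hab]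
        match_scalars <;> ring
      obtain ⟨m', rfl⟩ : ∃ m', m = m' + 1 := ⟨m - 1, by omega⟩
      have hbin := binom_nilp B N α hBN hN2 m'
      rw [hBm] at hbin
      have hsmul : (((m' : AlgebraicClosure K) + 1) * α ^ m') • N = (φ r - α ^ (m' + 1)) • 1 := by
        rw [sub_smul, hbin]
        abel
      have hc0 : ((m' : AlgebraicClosure K) + 1) * α ^ m' ≠ 0 := by
        apply mul_ne_zero
        · exact Nat.cast_add_one_ne_zero m'
        · exact pow_ne_zero _ hα0
      set c := ((m' : AlgebraicClosure K) + 1) * α ^ m' with hcdef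
      have hNs : N = (c⁻¹ * (φ r - α ^ (m' + 1))) • 1 := by
        rw [mul_smul, ← hsmul, smul_smul, inv_mul_cancel₀ hc0, one_smul]
      have hsq : (c⁻¹ * (φ r - α ^ (m' + 1))) * (c⁻¹ * (φ r - α ^ (m' + 1))) = 0 := by
        have := hN2
        rw [hNs, smul_mul_assoc, mul_smul_comm, one_mul, smul_smul] at this
        have h00 := congr_fun₂ this 0 0
        simpa [Matrix.smul_apply, Matrix.one_apply] using h00
      have hz : c⁻¹ * (φ r - α ^ (m' + 1)) = 0 := by
        rcases mul_eq_zero.mp hsq with h | h <;> exact h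
      have hN0 : N = 0 := by rw [hNs, hz, zero_smul]
      have hBs : B = α • 1 := by rw [hBN, hN0, add_zero]
      have : (M ^ 1).map φ = α • 1 := by
        rw [hBpow, pow_one]; exact hBs
      obtain ⟨r', hr'⟩ := scalar_of_map φ this
      have : (QuotientGroup.mk U : PGL2 K) ^ 1 = 1 := (crit 1).mpr ⟨r', hr'⟩
      rw [pow_one] at this
      rw [this, orderOf_one] at hordx
      omega
    -- eigenvectors give α^m = β^m = φ r
    have eigen : ∀ γ : AlgebraicClosure K, γ ^ 2 - Matrix.trace B * γ + Matrix.det B = 0 → γ ^ m = φ r := by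
      intro γ hγ
      have hdet0 : (B - γ • 1).det = 0 := by rw [det_sub_smul_one]; exact hγ
      obtain ⟨v, hv0, hv⟩ := (Matrix.exists_mulVec_eq_zero_iff).mpr hdet0
      have hvec : B.mulVec v = γ • v := by
        have expand : (B - γ • 1).mulVec v = B.mulVec v - γ • v := by
          rw [Matrix.sub_mulVec, Matrix.smul_mulVec, Matrix.one_mulVec]
        rw [expand] at hv
        linear_combination (norm := module) hv
      have hpow := pow_mulVec_eigen hvec m
      rw [hBm] at hpow
      have : (φ r) • v = γ ^ m • v := by
        rw [← hpow, Matrix.smul_mulVec, Matrix.one_mulVec]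
      obtain ⟨i, hi⟩ := Function.ne_iff.mp hv0
      have := congr_fun this i
      simp only [Pi.smul_apply, smul_eq_mul] at this
      exact (mul_right_cancel₀ hi this).symm
    have hαm : α ^ m = φ r := eigen α hroot'
    have hβm : β ^ m = φ r := by
      apply eigen
      rw [← hsum, ← hprod]; ring
    -- ζ = α/β is a primitive m-th root of unity
    set ζ := α * β⁻¹ with hζdef
    have hζ0 : ζ ≠ 0 := mul_ne_zero hα0 (inv_ne_zero hβ0)
    have hζm : ζ ^ m = 1 := by
      rw [hζdef, mul_pow, inv_pow, hαm, ← hβm, mul_inv_cancel₀ (pow_ne_zero _ hβ0)]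
    have hprim : IsPrimitiveRoot ζ m := by
      refine ⟨hζm, ?_⟩
      intro l hl
      have hpow : α ^ l = β ^ l := by
        have : (α * β⁻¹) ^ l = 1 := hl
        rw [mul_pow, inv_pow] at this
        field_simp at this
        tauto
      have key := pow_formula B α β hCH l
      rw [hpow] at key
      have hBl : B ^ l = (β ^ l) • 1 := by
        apply smul_right_injective (Matrix (Fin 2) (Fin 2) (AlgebraicClosure K))
          (sub_ne_zero_of_ne hαβ)
        show (α - β) • B ^ l = (α - β) • (β ^ l • 1)
        rw [key]
        match_scalars <;> ring
      rw [← hBpow] at hBl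
      obtain ⟨r', hr'⟩ := scalar_of_map φ hBl
      have := (crit l).mpr ⟨r', hr'⟩
      rw [← hordx]
      exact orderOf_dvd_of_pow_eq_one this
    -- ζ + ζ⁻¹ lies in the image of K
    have hmem : ζ + ζ⁻¹ ∈ φ.range := by
      refine ⟨M.trace ^ 2 / M.det - 2, ?_⟩
      rw [map_sub, map_div₀, map_pow, ← htB, ← hdB, ← hsum, ← hprod, hζdef]
      have h2 : φ 2 = 2 := map_ofNat φ 2
      rw [h2]
      field_simp
      ring
    -- transfer to ξ via Chebyshev-type recursion
    haveI : NeZero m := ⟨by omega⟩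
    obtain ⟨i, him, hζi⟩ := hprim.eq_pow_of_pow_eq_one hξ.pow_eq_one
    have hcheb := cheb φ.range hζ0 hmem i
    rw [← hζi, ← inv_pow]
    obtain ⟨y, hy⟩ := hcheb
    exact ⟨y, hy⟩
  · rintro ⟨c, hc⟩
    by_cases hm1 : m = 1
    · exact ⟨⊥, ⟨by rw [hm1]; exact MulEquiv.ofUnique⟩⟩
    have hm2 : 2 ≤ m := by omega
    have hξ1 : ξ ≠ 1 := by
      intro h
      have := hξ.dvd_of_pow_eq_one 1 (by simp [h])
      have := Nat.le_of_dvd one_pos this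
      omega
    by_cases hm2' : m = 2
    · subst hm2'
      have hξsq : ξ ^ 2 = 1 := hξ.pow_eq_one
      have hξn1 : ξ = -1 := by
        have : (ξ - 1) * (ξ + 1) = 0 := by linear_combination hξsq
        rcases mul_eq_zero.mp this with h | h
        · exact absurd (sub_eq_zero.mp h) hξ1
        · exact eq_neg_of_add_eq_zero_left h
      obtain ⟨g, hg⟩ := exists_orderOf_eq φ le_rfl hξ (β := (-1 : AlgebraicClosure K))
        (by norm_num) 0 (-1) (by rw [hξn1]; norm_num) (by rw [hξn1]; norm_num)
      exact exists_subgroup_zmod hg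
    · have hm3 : 3 ≤ m := by omega
      have hξ0 : ξ ≠ 0 := by
        intro h
        have := hξ.pow_eq_one
        rw [h, zero_pow (by omega)] at this
        exact zero_ne_one this
      have hξn1 : ξ ≠ -1 := by
        intro h
        have : ξ ^ 2 = 1 := by rw [h]; ring
        have := hξ.dvd_of_pow_eq_one 2 this
        have := Nat.le_of_dvd two_pos this
        omega
      have hξp1 : ξ + 1 ≠ 0 := fun h => hξn1 (eq_neg_of_add_eq_zero_left h)
      set β := (ξ + 1) * ξ⁻¹ with hβdef
      have hβ0 : β ≠ 0 := mul_ne_zero hξp1 (inv_ne_zero hξ0)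
      have ht : φ (c + 2) = ξ * β + β := by
        rw [map_add, hc]
        have h2 : φ 2 = 2 := map_ofNat φ 2
        rw [h2, hβdef]
        field_simp
        ring
      have hd : φ (c + 2) = ξ * β * β := by
        rw [map_add, hc]
        have h2 : φ 2 = 2 := map_ofNat φ 2
        rw [h2, hβdef]
        field_simp
        ring
      obtain ⟨g, hg⟩ := exists_orderOf_eq φ hm2 hξ hβ0 (c + 2) (c + 2) ht hd
      exact exists_subgroup_zmod hg
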